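/- Fix μ, ρ > 0 and let λ = ρμ. For every real m₀ ≥ 1, with α = e^{−1/m₀} and β = e^{−ρ/m₀}: (i) Δ_U(m₀) ≥ (3+6ρ+5ρ²)/(3λ(1+ρ)); (ii) Δ_M(m₀) ≥ (1+2ρ+2ρ²)/(λ(1+ρ)); (iii) Δ_D(m₀) ≥ (2+4ρ+3ρ²)/(2λ(1+ρ)). That is, for the same service rate and decision rate, the average age-upon-decisions under periodic decisions is at least that under Poisson decisions, for each of the uniform, exponential and deterministic service time distributions. -/

import Mathlib

open Real


/-- Approximate average AuD of the M/U/1/1-D bufferless system. -/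
noncomputable def ΔU (mu rho m₀ : ℝ) : ℝ :=
  (2 * rho * m₀ + 4 * m₀ + rho + 1) / (2 * mu * m₀ * (1 + rho))
    + (1 + Real.exp (-rho / m₀)) / (2 * mu * m₀ * (1 + rho) * (1 - Real.exp (-rho / m₀)))
    + rho * (8 * m₀ ^ 3 + 18 * m₀ ^ 2 + 13 * m₀ + 3) / (12 * mu * m₀ ^ 3 * (1 + rho))

/-- Approximate average AuD of the M/M/1/1-D bufferless system. -/
noncomputable def ΔM (mu rho m₀ : ℝ) : ℝ :=
  (2 + rho) / (mu * (1 + rho))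
    + rho * (1 + Real.exp (-1 / m₀)) / (2 * mu * m₀ * (1 + rho) * (1 - Real.exp (-1 / m₀)))
    + (1 + Real.exp (-rho / m₀)) / (2 * mu * m₀ * (1 + rho) * (1 - Real.exp (-rho / m₀)))

/-- Approximate average AuD of the M/D/1/1-D bufferless system. -/
noncomputable def ΔD (mu rho m₀ : ℝ) : ℝ :=
  (4 + 3 * rho) / (2 * mu * (1 + rho))
    + (1 + Real.exp (-rho / m₀)) / (2 * mu * m₀ * (1 + rho) * (1 - Real.exp (-rho / m₀)))

/-- Key inequality: `2 tanh(x/2) ≤ x` in exponential form, for `x > 0`. -/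
lemma key_coth (x : ℝ) (hx : 0 < x) :
    2 * (1 - Real.exp (-x)) ≤ x * (1 + Real.exp (-x)) := by
  set f : ℝ → ℝ := fun y => y + (y + 2) * Real.exp (-y) with hf
  have hd : ∀ y : ℝ, HasDerivAt f (1 - (y + 1) * Real.exp (-y)) y := by
    intro y
    have h1 : HasDerivAt (fun x : ℝ => Real.exp (-x)) (-Real.exp (-y)) y := by
      simpa using (hasDerivAt_neg y).exp
    have h2 := ((hasDerivAt_id y).add_const 2).mul h1
    have h3 := (hasDerivAt_id y).add h2
    refine h3.congr_deriv ?_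
    simp only [id_eq]
    ring
  have hmono : Monotone f := by
    apply monotone_of_deriv_nonneg
    · exact fun y => (hd y).differentiableAt
    · intro y
      rw [(hd y).deriv]
      have h1 : y + 1 ≤ Real.exp y := by
        have := Real.add_one_le_exp y; linarith
      have h2 : (y + 1) * Real.exp (-y) ≤ 1 := by
        rw [Real.exp_neg]
        rw [mul_inv_le_iff₀ (Real.exp_pos y)]
        linarith
      linarith
  have := hmono (le_of_lt hx)
  simp only [hf] at this
  simp only [neg_zero, Real.exp_zero] at this
  nlinarith [Real.exp_pos (-x)]

/-- For the same service rate and decision rate, the average age-upon-decisions under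
periodic decisions is at least that under Poisson decisions, for uniform, exponential
and deterministic service times (`λ = ρμ`). -/
theorem stmt_18 (mu rho lam : ℝ) (hmu : 0 < mu) (hrho : 0 < rho) (hlam : lam = rho * mu)
    (m₀ : ℝ) (hm₀ : 1 ≤ m₀) :
    ΔU mu rho m₀ ≥ (3 + 6 * rho + 5 * rho ^ 2) / (3 * lam * (1 + rho)) ∧
    ΔM mu rho m₀ ≥ (1 + 2 * rho + 2 * rho ^ 2) / (lam * (1 + rho)) ∧
    ΔD mu rho m₀ ≥ (2 + 4 * rho + 3 * rho ^ 2) / (2 * lam * (1 + rho)) := by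
  subst hlam
  have hm0 : (0:ℝ) < m₀ := lt_of_lt_of_le one_pos hm₀
  have hr1 : (0:ℝ) < 1 + rho := by linarith
  set β := Real.exp (-rho / m₀) with hβ
  set α := Real.exp (-1 / m₀) with hα
  have hβ0 : 0 < β := Real.exp_pos _
  have hα0 : 0 < α := Real.exp_pos _
  have hβ1 : β < 1 := by
    rw [hβ]; exact Real.exp_lt_one_iff.mpr <| div_neg_of_neg_of_pos (by linarith) hm0
  have hα1 : α < 1 := by
    rw [hα]; exact Real.exp_lt_one_iff.mpr <| div_neg_of_neg_of_pos (by linarith) hm0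
  -- key inequalities
  have hkβ : 2 * m₀ * (1 - β) ≤ rho * (1 + β) := by
    have := key_coth (rho / m₀) (div_pos hrho hm0)
    rw [neg_div] at hβ
    rw [hβ]
    have h2 : (rho / m₀) * (1 + Real.exp (-(rho / m₀))) * m₀ = rho * (1 + Real.exp (-(rho/m₀))) := by
      field_simp
    nlinarith [this, hm0]
  have hkα : 2 * m₀ * (1 - α) ≤ 1 * (1 + α) := by
    have := key_coth (1 / m₀) (div_pos one_pos hm0)
    rw [neg_div] at hα
    rw [hα]
    have h2 : (1 / m₀) * (1 + Real.exp (-(1 / m₀))) * m₀ = 1 * (1 + Real.exp (-(1/m₀))) := by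
      field_simp
    nlinarith [this, hm0]
  -- bound on the β-term
  have hTβ : 1 / (rho * mu * (1 + rho)) ≤ (1 + β) / (2 * mu * m₀ * (1 + rho) * (1 - β)) := by
    rw [div_le_div_iff₀ (by positivity) (mul_pos (by positivity) (by linarith : (0:ℝ) < 1 - β))]
    nlinarith [mul_le_mul_of_nonneg_left hkβ (le_of_lt (mul_pos hmu hr1))]
  have hTα : rho / (mu * (1 + rho)) ≤ rho * (1 + α) / (2 * mu * m₀ * (1 + rho) * (1 - α)) := by
    rw [div_le_div_iff₀ (by positivity) (mul_pos (by positivity) (by linarith : (0:ℝ) < 1 - α))]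
    nlinarith [mul_le_mul_of_nonneg_left hkα (le_of_lt (mul_pos hrho (mul_pos hmu hr1)))]
  refine ⟨?_, ?_, ?_⟩
  · -- ΔU
    unfold ΔU
    rw [← hβ, ge_iff_le]
    have hfirst : (6 + 5*rho) / (3 * mu * (1 + rho)) ≤
        (2 * rho * m₀ + 4 * m₀ + rho + 1) / (2 * mu * m₀ * (1 + rho))
          + rho * (8 * m₀ ^ 3 + 18 * m₀ ^ 2 + 13 * m₀ + 3) / (12 * mu * m₀ ^ 3 * (1 + rho)) := by
      rw [div_add_div _ _ (by positivity) (by positivity), div_le_div_iff₀ (by positivity) (by positivity)]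
      nlinarith [pow_le_pow_left₀ (by norm_num : (0:ℝ) ≤ 1) hm₀ 3, sq_nonneg m₀, mul_pos hmu hr1,
        mul_pos hrho hm0, pow_pos hm0 3, pow_pos hm0 2,
        mul_nonneg (mul_nonneg hmu.le hr1.le) (mul_nonneg hrho.le (pow_pos hm0 3).le),
        mul_nonneg (mul_nonneg hmu.le hr1.le) (mul_nonneg hrho.le (pow_pos hm0 2).le),
        mul_nonneg (mul_nonneg hmu.le hr1.le) (mul_nonneg hrho.le hm0.le),
        mul_nonneg (mul_nonneg hmu.le hr1.le) hrho.le,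
        mul_nonneg (mul_nonneg hmu.le hr1.le) (pow_pos hm0 2).le]
    have heq : (3 + 6 * rho + 5 * rho ^ 2) / (3 * (rho * mu) * (1 + rho))
        = (6 + 5*rho) / (3 * mu * (1 + rho)) + 1 / (rho * mu * (1 + rho)) := by
      field_simp
      ring
    rw [heq]
    linarith
  · -- ΔM
    unfold ΔM
    rw [← hβ, ← hα, ge_iff_le]
    have heq : (1 + 2 * rho + 2 * rho ^ 2) / (rho * mu * (1 + rho))
        = (2 + rho) / (mu * (1 + rho)) + rho / (mu * (1 + rho)) + 1 / (rho * mu * (1 + rho)) := by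
      field_simp
      ring
    rw [heq]
    linarith
  · -- ΔD
    unfold ΔD
    rw [← hβ, ge_iff_le]
    have heq : (2 + 4 * rho + 3 * rho ^ 2) / (2 * (rho * mu) * (1 + rho))
        = (4 + 3 * rho) / (2 * mu * (1 + rho)) + 1 / (rho * mu * (1 + rho)) := by
      field_simp
      ring
    rw [heq]
    linarith
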